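/- For a non-abelian extension 0→h→ĝ→g→0 of Lie triple systems, there is an exact sequence of groups and pointed sets: 1 → Aut_h^g(ĝ) → Aut_h(ĝ) →^λ Aut(g)×Aut(h) →^W H³_nab(g,h), where Aut_h^g(ĝ) = ker λ and W(α,β)=[(ω_{(α,β)},θ_{(α,β)},ρ_{(α,β)}) − (ω,θ,ρ)] is the Wells map; in particular ker W = Im λ. -/
import Mathlib


universe u v w

/-- A Lie triple system over a field `k`. -/
structure LTS (k : Type u) (V : Type v) [Field k] [AddCommGroup V] [Module k V] where
  t : V →ₗ[k] V →ₗ[k] V →ₗ[k] V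
  alt : ∀ x y, t x x y = 0
  cyc : ∀ x y z, t x y z + t y z x + t z x y = 0
  leib : ∀ a b x y z, t a b (t x y z) =
    t (t a b x) y z + t x (t a b y) z + t x y (t a b z)

/-- `D_θ(x,y) a = θ(y,x) a - θ(x,y) a`. -/
def Dmap {G H : Type*} [AddCommGroup H] (θ : G → G → H → H) (x y : G) (a : H) : H :=
  θ y x a - θ x y a

/-- `D_ρ(x)(a,b) = ρ(x)(b,a) - ρ(x)(a,b)`. -/
def Drho {G H : Type*} [AddCommGroup H] (ρ : G → H → H → H) (x : G) (a b : H) : H :=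
  ρ x b a - ρ x a b

/-- A non-abelian 3-cocycle on `g` with values in `h`: identities (3.2)–(3.14) of the paper,
together with the wedge conditions on `ω`, `θ`, `ρ`. -/
def IsNACocycle {G H : Type*} [AddCommGroup H]
    (tg : G → G → G → G) (th : H → H → H → H)
    (ω : G → G → G → H) (θ : G → G → H → H) (ρ : G → H → H → H) : Prop :=
  (∀ x y, ω x x y = 0) ∧
  (∀ x a, θ x x a = 0) ∧
  (∀ x a, ρ x a a = 0) ∧
  (∀ x y z, ω x y z + ω y z x + ω z x y = 0) ∧
  (∀ x1 x2 y1 y2 y3,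
    Dmap θ x1 x2 (ω y1 y2 y3) + ω x1 x2 (tg y1 y2 y3) =
      ω (tg x1 x2 y1) y2 y3 + θ y2 y3 (ω x1 x2 y1)
      + ω y1 (tg x1 x2 y2) y3 - θ y1 y3 (ω x1 x2 y2)
      + ω y1 y2 (tg x1 x2 y3) + Dmap θ y1 y2 (ω x1 x2 y3)) ∧
  (∀ x y z w a,
    Dmap θ x y (θ z w a) - θ z w (Dmap θ x y a) =
      θ (tg x y z) w a + θ z (tg x y w) a
      - Drho ρ w (ω x y z) a - ρ z a (ω x y w)) ∧
  (∀ x y z w a,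
    θ x (tg y z w) a - ρ x a (ω y z w) =
      θ z w (θ x y a) - θ y w (θ x z a) + Dmap θ y z (θ x w a)) ∧
  (∀ x y z a b,
    Dmap θ x y (ρ z a b) =
      ρ z (Dmap θ x y a) b + ρ (tg x y z) a b + th (ω x y z) a b
      + ρ z a (Dmap θ x y b)) ∧
  (∀ x y z a b,
    Dmap θ y z (ρ x a b) =
      ρ x a (Dmap θ y z b) - ρ z (θ x y a) b + ρ y (θ x z a) b) ∧
  (∀ x y z a b,
    θ y z (ρ x a b) =
      ρ x a (θ y z b) - Drho ρ z (θ x y a) b - ρ y b (θ x z a)) ∧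
  (∀ x y a b c,
    Dmap θ x y (th a b c) =
      th (Dmap θ x y a) b c + th a (Dmap θ x y b) c + th a b (Dmap θ x y c)) ∧
  (∀ x y a b c,
    ρ x a (ρ y b c) =
      ρ y (ρ x a b) c + ρ y b (ρ x a c) - th (θ x y a) b c) ∧
  (∀ x y a b c,
    th a b (θ x y c) =
      θ x y (th a b c) - Drho ρ y (Drho ρ x a b) c - ρ x c (Drho ρ y a b)) ∧
  (∀ x a b c d,
    th a b (ρ x c d) =
      ρ x (th a b c) d - th c (Drho ρ x a b) d + ρ x c (th a b d)) ∧
  (∀ x a b c d,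
    ρ x a (th b c d) =
      th (ρ x a b) c d + th b (ρ x a c) d + th b c (ρ x a d))

/-- The bracket `[x+a, y+b, z+c]_{(ω,θ,ρ)}` on `g ⊕ h`. -/
def nabBr {G H : Type*} [AddCommGroup H]
    (tg : G → G → G → G) (th : H → H → H → H)
    (ω : G → G → G → H) (θ : G → G → H → H) (ρ : G → H → H → H) :
    G × H → G × H → G × H → G × H :=
  fun p q r =>
    (tg p.1 q.1 r.1,
      ω p.1 q.1 r.1 + Dmap θ p.1 q.1 r.2 + θ q.1 r.1 p.2 - θ p.1 r.1 q.2
        + Drho ρ r.1 p.2 q.2 + ρ p.1 q.2 r.2 - ρ q.1 p.2 r.2 + th p.2 q.2 r.2)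

/-- Equivalence of two non-abelian 3-cocycles via `φ : g → h`
(equations (3.15)–(3.17) of the paper). -/
def CocycleEquiv {G H : Type*} [AddCommGroup H]
    (tg : G → G → G → G) (th : H → H → H → H)
    (ω1 : G → G → G → H) (θ1 : G → G → H → H) (ρ1 : G → H → H → H)
    (ω2 : G → G → G → H) (θ2 : G → G → H → H) (ρ2 : G → H → H → H)
    (φ : G → H) : Prop :=
  (∀ x y z,
    ω1 x y z - ω2 x y z =
      θ2 x z (φ y) - Dmap θ2 x y (φ z) + ρ2 x (φ y) (φ z) - θ2 y z (φ x)
        + Drho ρ2 z (φ x) (φ y) - ρ2 y (φ x) (φ z)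
        - th (φ x) (φ y) (φ z) + φ (tg x y z)) ∧
  (∀ x y a,
    θ1 x y a - θ2 x y a =
      ρ2 x a (φ y) - Drho ρ2 y a (φ x) + th a (φ x) (φ y)) ∧
  (∀ x a b, ρ1 x a b - ρ2 x a b = th a (φ x) b)

/-- The operation `i_f(g)` on degree-one cochains (from equations (4.2)–(4.4)). -/
def ibrack {M : Type*} [AddCommGroup M] (f g : M → M → M → M) :
    M → M → M → M → M → M :=
  fun x1 y1 x2 y2 z =>
    f (g x1 y1 x2) y2 z + f x2 (g x1 y1 y2) z
      - (f x1 y1 (g x2 y2 z) - f x2 y2 (g x1 y1 z))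

/-- The graded bracket `[f,g]_{Lts} = (-1)^{1·1} i_f(g) - i_g(f)` of two degree-one cochains. -/
def brLts {M : Type*} [AddCommGroup M] (f g : M → M → M → M) :
    M → M → M → M → M → M :=
  fun x1 y1 x2 y2 z =>
    -(ibrack f g x1 y1 x2 y2 z) - ibrack g f x1 y1 x2 y2 z

/-- Non-abelian 1-cocycles on `g` with values in `h`. -/
def IsZ1 {G H : Type*} [AddCommGroup H]
    (tg : G → G → G → G) (th : H → H → H → H)
    (θ : G → G → H → H) (ρ : G → H → H → H) (φ : G → H) : Prop :=
  (∀ x a b, th a (φ x) b = 0) ∧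
  (∀ x y a, th a (φ x) (φ y) - Drho ρ y a (φ x) + ρ x a (φ y) = 0) ∧
  (∀ x y z,
    Drho ρ z (φ x) (φ y) - ρ y (φ x) (φ z) - θ y z (φ x)
      + ρ x (φ y) (φ z) + θ x z (φ y) - Dmap θ x y (φ z)
      = th (φ x) (φ y) (φ z) - φ (tg x y z))

/-- The equivalence relation on triples `(ω,θ,ρ)` (raw cochain data) whose quotient is the
non-abelian cohomology `H³_nab(g,h)`. -/
def relH3 {k G H : Type*} [Field k] [AddCommGroup G] [Module k G]
    [AddCommGroup H] [Module k H] (Lg : LTS k G) (Lh : LTS k H)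
    (c1 c2 : (G → G → G → H) × (G → G → H → H) × (G → H → H → H)) : Prop :=
  ∃ φ : G →ₗ[k] H,
    CocycleEquiv (fun x y z => Lg.t x y z) (fun a b c => Lh.t a b c)
      c1.1 c1.2.1 c1.2.2 c2.1 c2.2.1 c2.2.2 (fun x => φ x)

/-- the Wells exact sequence
`1 → Aut_h^g(ĝ) → Aut_h(ĝ) → Aut(g) × Aut(h) → H³_nab(g,h)`.
Since `Aut_h^g(ĝ) = ker λ` by definition, the content is exactness at `Aut(g) × Aut(h)`:
a pair `(α,β)` lies in the image of `λ` if and only if the Wells map sends it to the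
trivial class, i.e. the class of the transformed cocycle equals the class of `(ω,θ,ρ)`. -/
-- ### auxiliary material

theorem addf_zero {A B : Type*} [AddCommGroup A] [AddCommGroup B] {f : A → B}
    (h : ∀ x y, f (x + y) = f x + f y) : f 0 = 0 := by
  have h0 := h 0 0
  rw [add_zero] at h0
  exact (left_eq_add.mp h0)

theorem addf_neg {A B : Type*} [AddCommGroup A] [AddCommGroup B] {f : A → B}
    (h : ∀ x y, f (x + y) = f x + f y) : ∀ x, f (-x) = - f x := by
  intro x
  have h1 := h x (-x)
  rw [add_neg_cancel, addf_zero h] at h1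
  exact (neg_eq_of_add_eq_zero_right h1.symm).symm

theorem addf_sub {A B : Type*} [AddCommGroup A] [AddCommGroup B] {f : A → B}
    (h : ∀ x y, f (x + y) = f x + f y) : ∀ x y, f (x - y) = f x - f y := by
  intro x y
  rw [sub_eq_add_neg, h, addf_neg h, sub_eq_add_neg]

theorem lts_skew {k V : Type*} [Field k] [AddCommGroup V] [Module k V]
    (L : LTS k V) (u v w : V) : L.t u v w = - L.t v u w := by
  have h := L.alt (u + v) w
  simp only [map_add, LinearMap.add_apply, L.alt] at h
  linear_combination (norm := abel1) h

/-- additivity in the `H`-slots of a raw cochain triple -/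
def Addc {G H : Type*} [AddCommGroup H]
    (c : (G → G → G → H) × (G → G → H → H) × (G → H → H → H)) : Prop :=
  (∀ x y a b, c.2.1 x y (a + b) = c.2.1 x y a + c.2.1 x y b) ∧
  (∀ x a b e, c.2.2 x (a + b) e = c.2.2 x a e + c.2.2 x b e) ∧
  (∀ x a b e, c.2.2 x a (b + e) = c.2.2 x a b + c.2.2 x a e)

section CE

variable {k G H : Type*} [Field k] [AddCommGroup G] [Module k G]
  [AddCommGroup H] [Module k H] (Lg : LTS k G) (Lh : LTS k H)

theorem rel_refl {c : (G → G → G → H) × (G → G → H → H) × (G → H → H → H)}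
    (hc : Addc c) : relH3 Lg Lh c c := by
  obtain ⟨h1, h2, h3⟩ := hc
  have z1 : ∀ x y, c.2.1 x y 0 = 0 := fun x y => addf_zero (h1 x y)
  have z2 : ∀ x e, c.2.2 x 0 e = 0 := fun x e =>
    addf_zero (f := fun a => c.2.2 x a e) (fun a b => h2 x a b e)
  have z3 : ∀ x a, c.2.2 x a 0 = 0 := fun x a => addf_zero (h3 x a)
  refine ⟨0, ?_, ?_, ?_⟩ <;> intros <;>
    simp [Dmap, Drho, z1, z2, z3, LTS.alt]

theorem rel_symm {c d : (G → G → G → H) × (G → G → H → H) × (G → H → H → H)}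
    (hd : Addc d) (h : relH3 Lg Lh c d) : relH3 Lg Lh d c := by
  obtain ⟨φ, h1, h2, h3⟩ := h
  obtain ⟨a1, a2, a3⟩ := hd
  simp only [] at h1 h2 h3
  have n1 : ∀ x y a, d.2.1 x y (-a) = - d.2.1 x y a := fun x y a =>
    addf_neg (f := fun a => d.2.1 x y a) (a1 x y) a
  have n2 : ∀ x a e, d.2.2 x (-a) e = - d.2.2 x a e := fun x a e =>
    addf_neg (f := fun a => d.2.2 x a e) (fun a b => a2 x a b e) a
  have n3 : ∀ x a e, d.2.2 x a (-e) = - d.2.2 x a e := fun x a e =>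
    addf_neg (f := fun e => d.2.2 x a e) (a3 x a) e
  have o3 : ∀ x a b, c.2.2 x a b = d.2.2 x a b + Lh.t a (φ x) b := fun x a b => by
    linear_combination (norm := abel1) h3 x a b
  have o2 : ∀ x y a, c.2.1 x y a = d.2.1 x y a +
      (d.2.2 x a (φ y) - (d.2.2 y (φ x) a - d.2.2 y a (φ x)) + Lh.t a (φ x) (φ y)) :=
    fun x y a => by
      have hh := h2 x y a
      simp only [Drho] at hh
      linear_combination (norm := abel1) hh
  have o1 : ∀ x y z, c.1 x y z = d.1 x y z +
      (d.2.1 x z (φ y) - (d.2.1 y x (φ z) - d.2.1 x y (φ z)) + d.2.2 x (φ y) (φ z)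
        - d.2.1 y z (φ x) + (d.2.2 z (φ y) (φ x) - d.2.2 z (φ x) (φ y))
        - d.2.2 y (φ x) (φ z) - Lh.t (φ x) (φ y) (φ z) + φ (Lg.t x y z)) :=
    fun x y z => by
      have hh := h1 x y z
      simp only [Dmap, Drho] at hh
      linear_combination (norm := abel1) hh
  refine ⟨-φ, ?_, ?_, ?_⟩
  · intro x y z
    simp only [Dmap, Drho, LinearMap.neg_apply, o1, o2, o3, n1, n2, n3, map_neg,
      LinearMap.neg_apply]
    linear_combination (norm := abel1)
      (lts_skew Lh (φ y) (φ x) (φ z)) - Lh.cyc (φ y) (φ x) (φ z) - Lh.cyc (φ x) (φ y) (φ z)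
      + (lts_skew Lh (φ z) (φ x) (φ y)) + (lts_skew Lh (φ z) (φ x) (φ y))
  · intro x y a
    simp only [Dmap, Drho, LinearMap.neg_apply, o2, o3, n1, n2, n3, map_neg,
      LinearMap.neg_apply]
    linear_combination (norm := abel1) - (lts_skew Lh a (φ x) (φ y)) -
      (lts_skew Lh (φ y) (φ x) a) + Lh.cyc (φ y) (φ x) a
  · intro x a b
    simp only [LinearMap.neg_apply, o3, map_neg, LinearMap.neg_apply]
    abel

theorem rel_trans {c d e : (G → G → G → H) × (G → G → H → H) × (G → H → H → H)}
    (he : Addc e) (hcd : relH3 Lg Lh c d) (hde : relH3 Lg Lh d e) : relH3 Lg Lh c e := by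
  obtain ⟨φ, h1, h2, h3⟩ := hcd
  obtain ⟨ψ, g1, g2, g3⟩ := hde
  obtain ⟨a1, a2, a3⟩ := he
  simp only [] at h1 h2 h3 g1 g2 g3
  have n1 : ∀ x y a, e.2.1 x y (-a) = - e.2.1 x y a := fun x y a =>
    addf_neg (f := fun a => e.2.1 x y a) (a1 x y) a
  have n2 : ∀ x a b, e.2.2 x (-a) b = - e.2.2 x a b := fun x a b =>
    addf_neg (f := fun a => e.2.2 x a b) (fun a b' => a2 x a b' b) a
  have n3 : ∀ x a b, e.2.2 x a (-b) = - e.2.2 x a b := fun x a b =>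
    addf_neg (f := fun b => e.2.2 x a b) (a3 x a) b
  have p3 : ∀ x a b, d.2.2 x a b = e.2.2 x a b + Lh.t a (ψ x) b := fun x a b => by
    linear_combination (norm := abel1) g3 x a b
  have p2 : ∀ x y a, d.2.1 x y a = e.2.1 x y a +
      (e.2.2 x a (ψ y) - (e.2.2 y (ψ x) a - e.2.2 y a (ψ x)) + Lh.t a (ψ x) (ψ y)) :=
    fun x y a => by
      have hh := g2 x y a
      simp only [Drho] at hh
      linear_combination (norm := abel1) hh
  have p1 : ∀ x y z, d.1 x y z = e.1 x y z +
      (e.2.1 x z (ψ y) - (e.2.1 y x (ψ z) - e.2.1 x y (ψ z)) + e.2.2 x (ψ y) (ψ z)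
        - e.2.1 y z (ψ x) + (e.2.2 z (ψ y) (ψ x) - e.2.2 z (ψ x) (ψ y))
        - e.2.2 y (ψ x) (ψ z) - Lh.t (ψ x) (ψ y) (ψ z) + ψ (Lg.t x y z)) :=
    fun x y z => by
      have hh := g1 x y z
      simp only [Dmap, Drho] at hh
      linear_combination (norm := abel1) hh
  have q3 : ∀ x a b, c.2.2 x a b = d.2.2 x a b + Lh.t a (φ x) b := fun x a b => by
    linear_combination (norm := abel1) h3 x a b
  have q2 : ∀ x y a, c.2.1 x y a = d.2.1 x y a +
      (d.2.2 x a (φ y) - (d.2.2 y (φ x) a - d.2.2 y a (φ x)) + Lh.t a (φ x) (φ y)) :=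
    fun x y a => by
      have hh := h2 x y a
      simp only [Drho] at hh
      linear_combination (norm := abel1) hh
  have q1 : ∀ x y z, c.1 x y z = d.1 x y z +
      (d.2.1 x z (φ y) - (d.2.1 y x (φ z) - d.2.1 x y (φ z)) + d.2.2 x (φ y) (φ z)
        - d.2.1 y z (φ x) + (d.2.2 z (φ y) (φ x) - d.2.2 z (φ x) (φ y))
        - d.2.2 y (φ x) (φ z) - Lh.t (φ x) (φ y) (φ z) + φ (Lg.t x y z)) :=
    fun x y z => by
      have hh := h1 x y z
      simp only [Dmap, Drho] at hh
      linear_combination (norm := abel1) hh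
  refine ⟨φ + ψ, ?_, ?_, ?_⟩
  · intro x y z
    simp only [Dmap, Drho, LinearMap.add_apply, q1, q2, q3, p1, p2, p3, a1, a2, a3,
      map_add, LinearMap.add_apply]
    linear_combination (norm := abel1)
      (lts_skew Lh (ψ z) (φ y) (φ x)) - Lh.cyc (ψ z) (φ y) (φ x)
      + (lts_skew Lh (φ y) (φ x) (ψ z)) - (lts_skew Lh (ψ x) (φ z) (φ y))
      + Lh.cyc (ψ x) (φ z) (φ y) + Lh.cyc (φ z) (ψ x) (φ y)
      - (lts_skew Lh (φ z) (φ y) (ψ x)) - (lts_skew Lh (ψ x) (ψ z) (φ y))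
      + Lh.cyc (ψ x) (ψ z) (φ y) - (lts_skew Lh (φ y) (ψ z) (ψ x))
      + Lh.cyc (φ y) (ψ z) (ψ x) + Lh.cyc (ψ x) (ψ y) (φ z)
      - (lts_skew Lh (ψ y) (φ z) (ψ x))
  · intro x y a
    simp only [Dmap, Drho, LinearMap.add_apply, q2, q3, p2, p3, a1, a2, a3,
      map_add, LinearMap.add_apply]
    linear_combination (norm := abel1)
      (lts_skew Lh (ψ y) a (φ x)) - Lh.cyc (ψ y) a (φ x)
  · intro x a b
    simp only [LinearMap.add_apply, q3, p3, map_add, LinearMap.add_apply]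
    abel

theorem rel_addc {c d : (G → G → G → H) × (G → G → H → H) × (G → H → H → H)}
    (h : relH3 Lg Lh c d) : Addc c ↔ Addc d := by
  obtain ⟨φ, h1, h2, h3⟩ := h
  simp only [] at h1 h2 h3
  constructor
  · rintro ⟨a1, a2, a3⟩
    have p3 : ∀ x a b, d.2.2 x a b = c.2.2 x a b - Lh.t a (φ x) b := fun x a b => by
      linear_combination (norm := abel1) - h3 x a b
    have b2 : ∀ x a b e, d.2.2 x (a + b) e = d.2.2 x a e + d.2.2 x b e := by
      intro x a b e
      simp only [p3, a2, map_add, LinearMap.add_apply]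
      abel
    have b3 : ∀ x a b e, d.2.2 x a (b + e) = d.2.2 x a b + d.2.2 x a e := by
      intro x a b e
      simp only [p3, a3, map_add, LinearMap.add_apply]
      abel
    have p2 : ∀ x y a, d.2.1 x y a = c.2.1 x y a -
        (d.2.2 x a (φ y) - (d.2.2 y (φ x) a - d.2.2 y a (φ x)) + Lh.t a (φ x) (φ y)) :=
      fun x y a => by
        have hh := h2 x y a
        simp only [Drho] at hh
        linear_combination (norm := abel1) - hh
    refine ⟨?_, b2, b3⟩
    intro x y a b
    simp only [p2, a1, b2, b3, map_add, LinearMap.add_apply]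
    abel
  · rintro ⟨a1, a2, a3⟩
    have p3 : ∀ x a b, c.2.2 x a b = d.2.2 x a b + Lh.t a (φ x) b := fun x a b => by
      linear_combination (norm := abel1) h3 x a b
    have b2 : ∀ x a b e, c.2.2 x (a + b) e = c.2.2 x a e + c.2.2 x b e := by
      intro x a b e
      simp only [p3, a2, map_add, LinearMap.add_apply]
      abel
    have b3 : ∀ x a b e, c.2.2 x a (b + e) = c.2.2 x a b + c.2.2 x a e := by
      intro x a b e
      simp only [p3, a3, map_add, LinearMap.add_apply]
      abel
    have p2 : ∀ x y a, c.2.1 x y a = d.2.1 x y a +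
        (d.2.2 x a (φ y) - (d.2.2 y (φ x) a - d.2.2 y a (φ x)) + Lh.t a (φ x) (φ y)) :=
      fun x y a => by
        have hh := h2 x y a
        simp only [Drho] at hh
        linear_combination (norm := abel1) hh
    refine ⟨?_, b2, b3⟩
    intro x y a b
    simp only [p2, a1, a2, a3, map_add, LinearMap.add_apply]
    abel

theorem eqvgen_key {c d : (G → G → G → H) × (G → G → H → H) × (G → H → H → H)}
    (h : Relation.EqvGen (relH3 Lg Lh) c d) :
    (Addc c ↔ Addc d) ∧ (Addc d → relH3 Lg Lh c d) ∧ (Addc c → relH3 Lg Lh d c) := by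
  induction h with
  | rel c d hr =>
      refine ⟨rel_addc Lg Lh hr, fun _ => hr, fun hc => ?_⟩
      exact rel_symm Lg Lh ((rel_addc Lg Lh hr).mp hc) hr
  | refl a => exact ⟨Iff.rfl, fun ha => rel_refl Lg Lh ha, fun ha => rel_refl Lg Lh ha⟩
  | symm c d _ ih => exact ⟨ih.1.symm, ih.2.2, ih.2.1⟩
  | trans c d e _ _ ih1 ih2 =>
      refine ⟨ih1.1.trans ih2.1, fun he => ?_, fun hc => ?_⟩
      · exact rel_trans Lg Lh he (ih1.2.1 (ih2.1.mpr he)) (ih2.2.1 he)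
      · exact rel_trans Lg Lh hc (ih2.2.2 (ih1.1.mp hc)) (ih1.2.2 hc)

end CE

theorem statement17 {k G H E : Type*} [Field k] [AddCommGroup G] [Module k G]
    [AddCommGroup H] [Module k H] [AddCommGroup E] [Module k E]
    (Lg : LTS k G) (Lh : LTS k H) (LE : LTS k E)
    (i : H →ₗ[k] E) (p : E →ₗ[k] G)
    (ihom : ∀ a b c, i (Lh.t a b c) = LE.t (i a) (i b) (i c))
    (phom : ∀ x y z, p (LE.t x y z) = Lg.t (p x) (p y) (p z))
    (iinj : Function.Injective i) (psurj : Function.Surjective p)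
    (hexact : LinearMap.range i = LinearMap.ker p)
    (s : G →ₗ[k] E) (hs : ∀ x, p (s x) = x)
    (ω : G → G → G → H) (θ : G → G → H → H) (ρ : G → H → H → H)
    (hω : ∀ x y z, i (ω x y z) = LE.t (s x) (s y) (s z) - s (Lg.t x y z))
    (hθ : ∀ x y a, i (θ x y a) = LE.t (i a) (s x) (s y))
    (hρ : ∀ x a b, i (ρ x a b) = LE.t (s x) (i a) (i b)) :
    ∀ (α : G ≃ₗ[k] G) (β : H ≃ₗ[k] H),
      (∀ x y z, α (Lg.t x y z) = Lg.t (α x) (α y) (α z)) →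
      (∀ a b c, β (Lh.t a b c) = Lh.t (β a) (β b) (β c)) →
      ((∃ γ : E ≃ₗ[k] E,
          (∀ x y z, γ (LE.t x y z) = LE.t (γ x) (γ y) (γ z)) ∧
          (∀ a, γ (i a) = i (β a)) ∧
          (∀ x, p (γ (s x)) = α x)) ↔
        Quot.mk (relH3 (k := k) Lg Lh)
            (fun x y z => β (ω (α.symm x) (α.symm y) (α.symm z)),
             fun x y a => β (θ (α.symm x) (α.symm y) (β.symm a)),
             fun x a b => β (ρ (α.symm x) (β.symm a) (β.symm b))) =
          Quot.mk (relH3 (k := k) Lg Lh) (ω, θ, ρ)) := by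
  intro α β hα hβ
  classical
  -- p kills the image of i
  have hpi : ∀ a : H, p (i a) = 0 := by
    intro a
    have hm : i a ∈ LinearMap.ker p := by rw [← hexact]; exact ⟨a, rfl⟩
    exact LinearMap.mem_ker.mp hm
  -- the retraction r : E →ₗ[k] H with i (r e) = e - s (p e)
  set iE := LinearEquiv.ofInjective i iinj with hiEdef
  have hiE : ∀ a : H, (iE a : E) = i a := fun a => rfl
  let q : E →ₗ[k] E := LinearMap.id - s ∘ₗ p
  have hqmem : ∀ e : E, q e ∈ LinearMap.range i := by
    intro e
    rw [hexact, LinearMap.mem_ker]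
    simp [q, hs]
  let r : E →ₗ[k] H := iE.symm.toLinearMap ∘ₗ LinearMap.codRestrict (LinearMap.range i) q hqmem
  have hir : ∀ e : E, i (r e) = e - s (p e) := by
    intro e
    have h1 : i (iE.symm ⟨q e, hqmem e⟩) = q e := by
      rw [← hiE, iE.apply_symm_apply]
    simpa [q, r, LinearMap.codRestrict] using h1
  have hri : ∀ a : H, r (i a) = a := by
    intro a
    apply iinj
    rw [hir, hpi, map_zero, sub_zero]
  have hrs : ∀ x : G, r (s x) = 0 := by
    intro x
    apply iinj
    rw [hir, hs, sub_self, map_zero]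
  have hdec : ∀ e : E, s (p e) + i (r e) = e := by
    intro e
    rw [hir]
    abel
  -- representation of the cocycle through r
  have wdef : ∀ x y z, ω x y z = r (LE.t (s x) (s y) (s z)) := by
    intro x y z
    apply iinj
    rw [hω, hir, phom, hs, hs, hs]
  have tdef : ∀ x y a, θ x y a = r (LE.t (i a) (s x) (s y)) := by
    intro x y a
    apply iinj
    rw [hθ, hir, phom, hpi, hs, hs]
    simp
  have rdef : ∀ x a b, ρ x a b = r (LE.t (s x) (i a) (i b)) := by
    intro x a b
    apply iinj
    rw [hρ, hir, phom, hpi, hpi, hs]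
    simp
  -- zero lemmas
  have w01 : ∀ y z, ω 0 y z = 0 := by intro y z; simp [wdef, hrs]
  have w02 : ∀ x z, ω x 0 z = 0 := by intro x z; simp [wdef, hrs]
  have w03 : ∀ x y, ω x y 0 = 0 := by intro x y; simp [wdef, hrs]
  have t01 : ∀ y a, θ 0 y a = 0 := by intro y a; simp [tdef, hrs]
  have t02 : ∀ x a, θ x 0 a = 0 := by intro x a; simp [tdef, hrs]
  have t03 : ∀ x y, θ x y 0 = 0 := by intro x y; simp [tdef, hrs]
  have r01 : ∀ a b, ρ 0 a b = 0 := by intro a b; simp [rdef, hrs]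
  have r02 : ∀ x b, ρ x 0 b = 0 := by intro x b; simp [rdef, hrs]
  have r03 : ∀ x a, ρ x a 0 = 0 := by intro x a; simp [rdef, hrs]
  -- additivity/negation lemmas in the H-slots
  have tadd3 : ∀ x y a b, θ x y (a + b) = θ x y a + θ x y b := by
    intro x y a b; simp [tdef, map_add, LinearMap.add_apply]
  have radd2 : ∀ x a b e, ρ x (a + b) e = ρ x a e + ρ x b e := by
    intro x a b e; simp [rdef, map_add, LinearMap.add_apply]
  have radd3 : ∀ x a b e, ρ x a (b + e) = ρ x a b + ρ x a e := by
    intro x a b e; simp [rdef, map_add, LinearMap.add_apply]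
  have tneg3 : ∀ x y a, θ x y (-a) = - θ x y a := by
    intro x y a; simp [tdef, map_neg, LinearMap.neg_apply]
  have rneg2 : ∀ x a b, ρ x (-a) b = - ρ x a b := by
    intro x a b; simp [rdef, map_neg, LinearMap.neg_apply]
  have rneg3 : ∀ x a b, ρ x a (-b) = - ρ x a b := by
    intro x a b; simp [rdef, map_neg, LinearMap.neg_apply]
  have tsub3 : ∀ x y a b, θ x y (a - b) = θ x y a - θ x y b := by
    intro x y a b; rw [sub_eq_add_neg, tadd3, tneg3, sub_eq_add_neg]
  have rsub2 : ∀ x a b e, ρ x (a - b) e = ρ x a e - ρ x b e := by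
    intro x a b e; rw [sub_eq_add_neg, radd2, rneg2, sub_eq_add_neg]
  have rsub3 : ∀ x a b e, ρ x a (b - e) = ρ x a b - ρ x a e := by
    intro x a b e; rw [sub_eq_add_neg, radd3, rneg3, sub_eq_add_neg]
  -- the master decomposition of the bracket
  have hstar : ∀ (x y z : G) (a b c : H),
      LE.t (s x + i a) (s y + i b) (s z + i c) =
        s (Lg.t x y z) + i (ω x y z + (θ y x c - θ x y c) + θ y z a - θ x z b
          + (ρ z b a - ρ z a b) + ρ x b c - ρ y a c + Lh.t a b c) := by
    intro x y z a b c
    have h1 : LE.t (s x) (s y) (s z) = s (Lg.t x y z) + i (ω x y z) := by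
      rw [hω]; abel
    have h2 : LE.t (i a) (s y) (s z) = i (θ y z a) := (hθ y z a).symm
    have h3 : LE.t (s x) (i b) (s z) = - i (θ x z b) := by
      rw [lts_skew LE, hθ]
    have h4 : LE.t (s x) (s y) (i c) = i (θ y x c) - i (θ x y c) := by
      have hc := LE.cyc (s x) (s y) (i c)
      have k1 : LE.t (s y) (i c) (s x) = - i (θ y x c) := by rw [lts_skew LE, hθ]
      have k2 : LE.t (i c) (s x) (s y) = i (θ x y c) := (hθ x y c).symm
      rw [k1, k2] at hc
      linear_combination (norm := abel1) hc
    have h5 : LE.t (i a) (i b) (s z) = i (ρ z b a) - i (ρ z a b) := by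
      have hc := LE.cyc (i a) (i b) (s z)
      have k1 : LE.t (i b) (s z) (i a) = - i (ρ z b a) := by rw [lts_skew LE, hρ]
      have k2 : LE.t (s z) (i a) (i b) = i (ρ z a b) := (hρ z a b).symm
      rw [k1, k2] at hc
      linear_combination (norm := abel1) hc
    have h6 : LE.t (s x) (i b) (i c) = i (ρ x b c) := (hρ x b c).symm
    have h7 : LE.t (i a) (s y) (i c) = - i (ρ y a c) := by
      rw [lts_skew LE, hρ]
    have h8 : LE.t (i a) (i b) (i c) = i (Lh.t a b c) := (ihom a b c).symm
    simp only [map_add, LinearMap.add_apply, h1, h2, h3, h4, h5, h6, h7, h8]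
    simp only [map_add, map_sub]
    abel
  constructor
  · -- forward direction
    rintro ⟨γ, hγt, hγi, hγp⟩
    set ψm : G →ₗ[k] H := r ∘ₗ (γ.toLinearMap ∘ₗ s) with hψdef
    have hψ : ∀ x, i (ψm x) = γ (s x) - s (α x) := by
      intro x
      show i (r (γ (s x))) = _
      rw [hir, hγp]
    have hγs : ∀ x, γ (s x) = s (α x) + i (ψm x) := by
      intro x; rw [hψ]; abel
    have K3 : ∀ x a b, β (ρ x a b) = ρ (α x) (β a) (β b) + Lh.t (ψm x) (β a) (β b) := by
      intro x a b
      apply iinj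
      have e1 : γ (i (ρ x a b)) = i (β (ρ x a b)) := hγi _
      rw [← e1, hρ, hγt, hγs, hγi, hγi]
      have h0 := hstar (α x) 0 0 (ψm x) (β a) (β b)
      simp only [map_zero, zero_add] at h0
      rw [h0]
      simp only [map_zero, LinearMap.zero_apply, w02, w03, t01, t02, t03, r01,
        map_zero, zero_add, add_zero, sub_zero, sub_self, neg_zero]
    have K2 : ∀ x y a, β (θ x y a) = θ (α x) (α y) (β a)
        + (ρ (α y) (ψm x) (β a) - ρ (α y) (β a) (ψm x)) - ρ (α x) (β a) (ψm y)
        + Lh.t (β a) (ψm x) (ψm y) := by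
      intro x y a
      apply iinj
      have e1 : γ (i (θ x y a)) = i (β (θ x y a)) := hγi _
      rw [← e1, hθ, hγt, hγs, hγs, hγi]
      have h0 := hstar 0 (α x) (α y) (β a) (ψm x) (ψm y)
      simp only [map_zero, zero_add] at h0
      rw [h0]
      simp only [map_zero, LinearMap.zero_apply, w01, t01, t02, t03, r01,
        map_zero, zero_add, add_zero, sub_zero, sub_self, neg_zero, zero_sub]
    have K1 : ∀ x y z, β (ω x y z) + ψm (Lg.t x y z) =
        ω (α x) (α y) (α z) + (θ (α y) (α x) (ψm z) - θ (α x) (α y) (ψm z))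
        + θ (α y) (α z) (ψm x) - θ (α x) (α z) (ψm y)
        + (ρ (α z) (ψm y) (ψm x) - ρ (α z) (ψm x) (ψm y))
        + ρ (α x) (ψm y) (ψm z) - ρ (α y) (ψm x) (ψm z)
        + Lh.t (ψm x) (ψm y) (ψm z) := by
      intro x y z
      apply iinj
      have w1 : γ (LE.t (s x) (s y) (s z)) =
          s (Lg.t (α x) (α y) (α z)) + (i (β (ω x y z)) + i (ψm (Lg.t x y z))) := by
        have e2 : LE.t (s x) (s y) (s z) = i (ω x y z) + s (Lg.t x y z) := by
          rw [hω]; abel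
        rw [e2, map_add, hγi, hγs, hα]
        abel
      have w2 : γ (LE.t (s x) (s y) (s z)) =
          LE.t (s (α x) + i (ψm x)) (s (α y) + i (ψm y)) (s (α z) + i (ψm z)) := by
        rw [hγt, hγs, hγs, hγs]
      rw [w2, hstar] at w1
      have := (add_left_cancel w1).symm
      rw [map_add, this]
    apply Quot.sound
    have hσt : ∀ x y z, Lg.t (α.symm x) (α.symm y) (α.symm z) = α.symm (Lg.t x y z) := by
      intro x y z
      apply α.injective
      rw [hα]
      simp only [LinearEquiv.apply_symm_apply]
    refine ⟨-(ψm ∘ₗ α.symm.toLinearMap), ?_, ?_, ?_⟩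
    · intro x y z
      have hh := K1 (α.symm x) (α.symm y) (α.symm z)
      simp only [LinearEquiv.apply_symm_apply, hσt] at hh
      simp only [Dmap, Drho, LinearMap.neg_apply, LinearMap.comp_apply,
        LinearEquiv.coe_coe, map_neg, tneg3, rneg2, rneg3, neg_neg]
      linear_combination (norm := abel1) hh
    · intro x y a
      have hh := K2 (α.symm x) (α.symm y) (β.symm a)
      simp only [LinearEquiv.apply_symm_apply] at hh
      simp only [Dmap, Drho, LinearMap.neg_apply, LinearMap.comp_apply,
        LinearEquiv.coe_coe, map_neg, tneg3, rneg2, rneg3, neg_neg]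
      linear_combination (norm := abel1) hh
    · intro x a b
      have hh := K3 (α.symm x) (β.symm a) (β.symm b)
      simp only [LinearEquiv.apply_symm_apply] at hh
      simp only [Dmap, Drho, LinearMap.neg_apply, LinearMap.comp_apply,
        LinearEquiv.coe_coe, map_neg, tneg3, rneg2, rneg3, neg_neg]
      linear_combination (norm := abel1) hh + lts_skew Lh (ψm (α.symm x)) a b
  · -- backward direction
    intro hquot
    have hEG := Quot.eqvGen_exact hquot
    have hAdd : Addc (ω, θ, ρ) := ⟨tadd3, radd2, radd3⟩
    obtain ⟨φm, ce1, ce2, ce3⟩ := (eqvgen_key Lg Lh hEG).2.1 hAdd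
    simp only [] at ce1 ce2 ce3
    -- oriented consequences of the cocycle equivalence
    have O3 : ∀ x a b, β (ρ x a b) = ρ (α x) (β a) (β b) + Lh.t (β a) (φm (α x)) (β b) := by
      intro x a b
      have hh := ce3 (α x) (β a) (β b)
      simp only [LinearEquiv.symm_apply_apply] at hh
      linear_combination (norm := abel1) hh
    have O2 : ∀ x y a, β (θ x y a) = θ (α x) (α y) (β a) +
        (ρ (α x) (β a) (φm (α y)) - (ρ (α y) (φm (α x)) (β a) - ρ (α y) (β a) (φm (α x)))
          + Lh.t (β a) (φm (α x)) (φm (α y))) := by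
      intro x y a
      have hh := ce2 (α x) (α y) (β a)
      simp only [LinearEquiv.symm_apply_apply, Drho] at hh
      linear_combination (norm := abel1) hh
    have O1 : ∀ x y z, β (ω x y z) = ω (α x) (α y) (α z) +
        (θ (α x) (α z) (φm (α y)) - (θ (α y) (α x) (φm (α z)) - θ (α x) (α y) (φm (α z)))
          + ρ (α x) (φm (α y)) (φm (α z)) - θ (α y) (α z) (φm (α x))
          + (ρ (α z) (φm (α y)) (φm (α x)) - ρ (α z) (φm (α x)) (φm (α y)))
          - ρ (α y) (φm (α x)) (φm (α z))
          - Lh.t (φm (α x)) (φm (α y)) (φm (α z)) + φm (Lg.t (α x) (α y) (α z))) := by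
      intro x y z
      have hh := ce1 (α x) (α y) (α z)
      simp only [LinearEquiv.symm_apply_apply, Dmap, Drho] at hh
      linear_combination (norm := abel1) hh
    -- the automorphism of E
    let γl : E →ₗ[k] E := (s ∘ₗ α.toLinearMap ∘ₗ p) + (i ∘ₗ β.toLinearMap ∘ₗ r)
      - (i ∘ₗ φm ∘ₗ α.toLinearMap ∘ₗ p)
    let δl : E →ₗ[k] E := (s ∘ₗ α.symm.toLinearMap ∘ₗ p) + (i ∘ₗ β.symm.toLinearMap ∘ₗ r)
      + (i ∘ₗ β.symm.toLinearMap ∘ₗ φm ∘ₗ p)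
    have hγl : ∀ e, γl e = s (α (p e)) + i (β (r e)) - i (φm (α (p e))) := by
      intro e
      simp [γl, LinearMap.sub_apply, LinearMap.add_apply, LinearMap.comp_apply]
    have hδl : ∀ e, δl e = s (α.symm (p e)) + i (β.symm (r e)) + i (β.symm (φm (p e))) := by
      intro e
      simp [δl, LinearMap.add_apply, LinearMap.comp_apply]
    have hpγ : ∀ e, p (γl e) = α (p e) := by
      intro e
      rw [hγl]
      simp [map_add, map_sub, hs, hpi]
    have hrγ : ∀ e, r (γl e) = β (r e) - φm (α (p e)) := by
      intro e
      rw [hγl]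
      simp [map_add, map_sub, hrs, hri]
    have hinv1 : ∀ e, δl (γl e) = e := by
      intro e
      rw [hδl, hpγ, hrγ]
      simp only [LinearEquiv.symm_apply_apply, map_sub]
      linear_combination (norm := abel1) hdec e
    have hinv2 : ∀ e, γl (δl e) = e := by
      intro e
      have hp' : p (δl e) = α.symm (p e) := by
        rw [hδl]
        simp [map_add, hs, hpi]
      have hr' : r (δl e) = β.symm (r e) + β.symm (φm (p e)) := by
        rw [hδl]
        simp [map_add, hrs, hri]
      rw [hγl, hp', hr']
      simp only [LinearEquiv.apply_symm_apply, map_add]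
      linear_combination (norm := abel1) hdec e
    refine ⟨LinearEquiv.ofLinear γl δl (LinearMap.ext hinv2) (LinearMap.ext hinv1), ?_, ?_, ?_⟩
    · -- homomorphism property
      intro u v w
      simp only [LinearEquiv.ofLinear_apply]
      have key : ∀ x y z a b c,
          β (ω x y z + (θ y x c - θ x y c) + θ y z a - θ x z b
              + (ρ z b a - ρ z a b) + ρ x b c - ρ y a c + Lh.t a b c)
            - φm (Lg.t (α x) (α y) (α z)) =
          ω (α x) (α y) (α z)
            + (θ (α y) (α x) (β c - φm (α z)) - θ (α x) (α y) (β c - φm (α z)))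
            + θ (α y) (α z) (β a - φm (α x)) - θ (α x) (α z) (β b - φm (α y))
            + (ρ (α z) (β b - φm (α y)) (β a - φm (α x))
                - ρ (α z) (β a - φm (α x)) (β b - φm (α y)))
            + ρ (α x) (β b - φm (α y)) (β c - φm (α z))
            - ρ (α y) (β a - φm (α x)) (β c - φm (α z))
            + Lh.t (β a - φm (α x)) (β b - φm (α y)) (β c - φm (α z)) := by
        intro x y z a b c
        simp only [map_add, map_sub]
        simp only [O1, O2, O3, hβ]
        simp only [tsub3, rsub2, rsub3, map_sub, LinearMap.sub_apply]
        linear_combination (norm := abel1)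
          - lts_skew Lh (β a) (φm (α z)) (β b) + Lh.cyc (β b) (φm (α z)) (β a)
          - lts_skew Lh (β c) (β b) (φm (α x)) + Lh.cyc (β c) (β b) (φm (α x))
          + Lh.cyc (β b) (β c) (φm (α x)) - lts_skew Lh (φm (α x)) (β c) (β b)
          - lts_skew Lh (β b) (φm (α x)) (φm (α z))
          + lts_skew Lh (β c) (φm (α y)) (φm (α x))
          - Lh.cyc (φm (α x)) (φm (α y)) (β c)
      have hu : u = s (p u) + i (r u) := (hdec u).symm
      have hv : v = s (p v) + i (r v) := (hdec v).symm
      have hw : w = s (p w) + i (r w) := (hdec w).symm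
      rw [hu, hv, hw]
      have hγsi : ∀ (g : G) (h : H), γl (s g + i h) = s (α g) + i (β h - φm (α g)) := by
        intro g h
        rw [hγl]
        simp only [map_add, hs, hpi, add_zero, hrs, hri, zero_add, map_sub]
        abel
      rw [hstar, hγsi, hγsi, hγsi, hγsi, hstar, hα]
      rw [key]
    · -- compatibility with i
      intro a
      simp only [LinearEquiv.ofLinear_apply]
      rw [hγl]
      simp [hpi, hri]
    · -- compatibility with p and s
      intro x
      simp only [LinearEquiv.ofLinear_apply]
      rw [hγl]
      simp [hs, hrs, hpi]
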